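/- Let n ≥ 1, let t ∈ {1,…,n}, let δ ∈ (0,1], let γ ∈ (0,1], let w(1),…,w(n) be positive integers with partial sums W(0) = 0, W(i) = w(1)+⋯+w(i), and let ρ = Σ_{i=1}^n w(i). For i ≤ t define q(i,t) = min{ 1, ((1+δ)/δ)·ln(4t³/γ)·w(i)/(W(t) − W(i−1)) }, and let M = (2/δ)·ln(4n³/γ)·ln(e·ρ). If Z_1,…,Z_t are independent random variables with Z_i taking the value 1 with probability q(i,t) and 0 otherwise, then Prob[ Σ_{i=1}^t Z_i ≥ e²·M ] ≤ γ/(2n). -/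

import Mathlib

open MeasureTheory ProbabilityTheory

/-- With positive integer weights `w`, partial sums `W`, `ρ = Σ w(i)`,
`q(i,t) = min{1, ((1+δ)/δ)·ln(4t³/γ)·w(i)/(W(t) − W(i−1))}` and
`M = (2/δ)·ln(4n³/γ)·ln(e·ρ)`: if `Z_1, …, Z_t` are independent random variables with
`Z_i = 1` with probability `q(i,t)` and `0` otherwise, then
`Prob[Σ Z_i ≥ e²·M] ≤ γ/(2n)`. -/
lemma harmonic_sum_le (t : ℕ) (ht : 1 ≤ t) (w : ℕ → ℕ) (hw : ∀ i, 1 ≤ i → i ≤ t → 0 < w i)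
    (W : ℕ → ℕ) (hW : ∀ k, W k = ∑ j ∈ Finset.Icc 1 k, w j) :
    ∑ i ∈ Finset.range t, (w (i + 1) : ℝ) / ((W t : ℝ) - W i) ≤
      Real.log (Real.exp 1 * W t) := by
  have hW0 : W 0 = 0 := by simp [hW]
  have hWsucc : ∀ k, W (k + 1) = W k + w (k + 1) := by
    intro k
    rw [hW, hW, Finset.sum_Icc_succ_top (Nat.succ_le_succ (Nat.zero_le k))]
  have hmono : ∀ {a b : ℕ}, a ≤ b → W a ≤ W b := by
    intro a b hab
    rw [hW, hW]
    exact Finset.sum_le_sum_of_subset (Finset.Icc_subset_Icc_right hab)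
  have hlt : ∀ i, i < t → W i < W t := by
    intro i hi
    have h1 := hw (i + 1) (by omega) hi
    have h2 := hWsucc i
    have h3 : W (i + 1) ≤ W t := hmono hi
    omega
  obtain ⟨s, rfl⟩ : ∃ s, t = s + 1 := ⟨t - 1, (Nat.succ_pred_eq_of_pos ht).symm⟩
  have hwt : 0 < w (s + 1) := hw (s + 1) (by omega) le_rfl
  have hWt : 0 < W (s + 1) := by have := hWsucc s; omega
  rw [Finset.sum_range_succ]
  have hlast : (w (s + 1) : ℝ) / ((W (s + 1) : ℝ) - W s) = 1 := by
    rw [hWsucc s]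
    push_cast
    rw [add_sub_cancel_left]
    exact div_self (by positivity)
  set f : ℕ → ℝ := fun i => Real.log ((W (s + 1) : ℝ) - W i) with hf
  have hsum : ∑ i ∈ Finset.range s, (w (i + 1) : ℝ) / ((W (s + 1) : ℝ) - W i) ≤
      ∑ i ∈ Finset.range s, (f i - f (i + 1)) := by
    apply Finset.sum_le_sum
    intro i hi
    simp only [Finset.mem_range] at hi
    have hib : (0 : ℝ) < (W (s + 1) : ℝ) - W (i + 1) := by
      have := hlt (i + 1) (by omega)
      have : (W (i + 1) : ℝ) < W (s + 1) := by exact_mod_cast this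
      linarith
    have hia : (0 : ℝ) < (W (s + 1) : ℝ) - W i := by
      have := hlt i (by omega)
      have : (W i : ℝ) < W (s + 1) := by exact_mod_cast this
      linarith
    set a : ℝ := (W (s + 1) : ℝ) - W i
    set b : ℝ := (W (s + 1) : ℝ) - W (i + 1)
    have hwv : (w (i + 1) : ℝ) = a - b := by
      have := hWsucc i
      have h2 : (W (i + 1) : ℝ) = W i + w (i + 1) := by exact_mod_cast this
      simp only [a, b, h2]; ring
    have hlog : Real.log b - Real.log a ≤ b / a - 1 := by
      have h := Real.log_le_sub_one_of_pos (div_pos hib hia)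
      rwa [Real.log_div hib.ne' hia.ne'] at h
    have hdiv : (a - b) / a = 1 - b / a := by field_simp
    rw [hwv, hf]
    simp only []
    rw [hdiv]
    have : f i = Real.log a := rfl
    have : f (i + 1) = Real.log b := rfl
    linarith [hlog]
  have htel : ∑ i ∈ Finset.range s, (f i - f (i + 1)) = f 0 - f s :=
    Finset.sum_range_sub' f s
  have hf0 : f 0 = Real.log (W (s + 1)) := by simp [hf, hW0]
  have hfs : 0 ≤ f s := by
    have : f s = Real.log (w (s + 1)) := by
      rw [hf]
      have : (W (s + 1) : ℝ) - W s = w (s + 1) := by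
        have := hWsucc s; push_cast [this]; ring
      simp [this]
    rw [this]
    exact Real.log_nonneg (by exact_mod_cast hwt)
  have hre : Real.log (Real.exp 1 * W (s + 1)) = 1 + Real.log (W (s + 1)) := by
    rw [Real.log_mul (Real.exp_ne_zero 1) (by exact_mod_cast hWt.ne'), Real.log_exp]
  rw [hlast, hre]
  linarith [hsum, htel, hf0, hfs]

set_option maxHeartbeats 1600000 in
theorem remembered_set_space_bound (n t : ℕ) (hn : 1 ≤ n) (ht1 : 1 ≤ t) (htn : t ≤ n)
    (δ γ : ℝ) (hδ0 : 0 < δ) (hδ1 : δ ≤ 1) (hγ0 : 0 < γ) (hγ1 : γ ≤ 1)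
    (w : ℕ → ℕ) (hw : ∀ i, 1 ≤ i → i ≤ n → 0 < w i)
    (W : ℕ → ℕ) (hW : ∀ k, W k = ∑ j ∈ Finset.Icc 1 k, w j)
    (ρ : ℕ) (hρ : ρ = ∑ i ∈ Finset.Icc 1 n, w i)
    (q : ℕ → ℕ → ℝ)
    (hq : ∀ i, 1 ≤ i → i ≤ t → q i t = min 1 (((1 + δ) / δ) * Real.log (4 * t ^ 3 / γ) *
      (w i : ℝ) / ((W t : ℝ) - (W (i - 1) : ℝ))))
    (M : ℝ) (hM : M = (2 / δ) * Real.log (4 * n ^ 3 / γ) * Real.log (Real.exp 1 * ρ))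
    {Ω : Type*} [MeasureSpace Ω] [IsProbabilityMeasure (ℙ : Measure Ω)]
    (Z : Fin t → Ω → ℝ) (hmeas : ∀ i, Measurable (Z i))
    (h01 : ∀ i ω, Z i ω = 0 ∨ Z i ω = 1)
    (hZq : ∀ i : Fin t, (ℙ {ω | Z i ω = 1}).toReal = q (i.1 + 1) t)
    (hindep : iIndepFun Z ℙ) :
    (ℙ {ω | Real.exp 1 ^ 2 * M ≤ ∑ i, Z i ω}).toReal ≤ γ / (2 * n) := by
  have he2 : (2 : ℝ) ≤ Real.exp 1 := by linarith [Real.add_one_le_exp (1 : ℝ)]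
  -- basic facts about the q's
  have hq0 : ∀ i : Fin t, 0 ≤ q (i.1 + 1) t := fun i => (hZq i) ▸ ENNReal.toReal_nonneg
  -- indicator representation and expectations
  have hA : ∀ i : Fin t, MeasurableSet {ω | Z i ω = 1} := fun i =>
    (hmeas i) (measurableSet_singleton 1)
  have hZind : ∀ i : Fin t, Z i = Set.indicator {ω | Z i ω = 1} (fun _ => (1 : ℝ)) := by
    intro i
    funext ω
    rcases h01 i ω with h | h <;> simp [Set.indicator, h]
  have hint : ∀ i : Fin t, Integrable (Z i) ℙ := by
    intro i
    rw [hZind i]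
    exact (integrable_const (1 : ℝ)).indicator (hA i)
  have hEZ : ∀ i : Fin t, ∫ ω, Z i ω ∂ℙ = q (i.1 + 1) t := by
    intro i
    rw [← hZq i]
    conv_lhs => rw [hZind i]
    rw [integral_indicator_const (1 : ℝ) (hA i)]
    simp [Measure.real]
  -- the mgf of each Z i at 1
  have hmgf : ∀ i : Fin t, mgf (Z i) ℙ 1 = 1 + (Real.exp 1 - 1) * q (i.1 + 1) t := by
    intro i
    have hfun : (fun ω => Real.exp (1 * Z i ω)) =
        fun ω => 1 + (Real.exp 1 - 1) * Z i ω := by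
      funext ω
      rcases h01 i ω with h | h <;> simp [h] <;> ring
    rw [mgf, hfun, integral_add (integrable_const 1) ((hint i).const_mul _),
      integral_const, integral_const_mul, hEZ i]
    simp
  -- the sum of the q's is at most M
  have hWt1 : 1 ≤ W t := by
    rw [hW]
    calc 1 ≤ w 1 := hw 1 le_rfl (le_trans ht1 htn)
      _ ≤ ∑ j ∈ Finset.Icc 1 t, w j :=
        Finset.single_le_sum (fun j _ => Nat.zero_le _) (Finset.mem_Icc.mpr ⟨le_rfl, ht1⟩)
  have hρ1 : 1 ≤ ρ := by
    rw [hρ]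
    calc 1 ≤ w 1 := hw 1 le_rfl hn
      _ ≤ ∑ j ∈ Finset.Icc 1 n, w j :=
        Finset.single_le_sum (fun j _ => Nat.zero_le _) (Finset.mem_Icc.mpr ⟨le_rfl, hn⟩)
  have hWtρ : W t ≤ ρ := by
    rw [hW, hρ]
    exact Finset.sum_le_sum_of_subset (Finset.Icc_subset_Icc_right htn)
  set c : ℝ := ((1 + δ) / δ) * Real.log (4 * t ^ 3 / γ) with hc
  have hlogt0 : 0 ≤ Real.log (4 * t ^ 3 / γ) := by
    apply Real.log_nonneg
    rw [le_div_iff₀ hγ0]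
    have h3 : (1 : ℝ) ≤ (t : ℝ) ^ 3 := by exact_mod_cast Nat.one_le_pow 3 t (by omega)
    linarith
  have hc0 : 0 ≤ c := mul_nonneg (by positivity) hlogt0
  have hL1 : Real.log (4 * (t : ℝ) ^ 3 / γ) ≤ Real.log (4 * (n : ℝ) ^ 3 / γ) := by
    have ht' : (0 : ℝ) < t := by exact_mod_cast ht1
    have htn' : (t : ℝ) ≤ n := by exact_mod_cast htn
    exact Real.log_le_log (by positivity) (by gcongr)
  have hL2 : 1 ≤ Real.log (Real.exp 1 * ρ) := by
    have : Real.exp 1 ≤ Real.exp 1 * ρ :=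
      le_mul_of_one_le_right (Real.exp_pos 1).le (by exact_mod_cast hρ1)
    calc 1 = Real.log (Real.exp 1) := (Real.log_exp 1).symm
      _ ≤ Real.log (Real.exp 1 * ρ) := Real.log_le_log (Real.exp_pos 1) this
  have hμ : ∑ i : Fin t, q (i.1 + 1) t ≤ M := by
    rw [show (∑ i : Fin t, q (i.1 + 1) t) = ∑ i ∈ Finset.range t, q (i + 1) t from
      Fin.sum_univ_eq_sum_range (fun i => q (i + 1) t) t]
    have hterm : ∀ i ∈ Finset.range t,
        q (i + 1) t ≤ c * ((w (i + 1) : ℝ) / ((W t : ℝ) - W i)) := by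
      intro i hi
      simp only [Finset.mem_range] at hi
      rw [hq (i + 1) (by omega) (by omega)]
      refine le_trans (min_le_right _ _) (le_of_eq ?_)
      simp only [Nat.add_sub_cancel, hc]
      ring
    calc ∑ i ∈ Finset.range t, q (i + 1) t
        ≤ ∑ i ∈ Finset.range t, c * ((w (i + 1) : ℝ) / ((W t : ℝ) - W i)) :=
          Finset.sum_le_sum hterm
      _ = c * ∑ i ∈ Finset.range t, (w (i + 1) : ℝ) / ((W t : ℝ) - W i) := by
          rw [Finset.mul_sum]
      _ ≤ c * Real.log (Real.exp 1 * W t) := by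
          apply mul_le_mul_of_nonneg_left _ hc0
          exact harmonic_sum_le t ht1 w (fun i h1 h2 => hw i h1 (le_trans h2 htn)) W hW
      _ ≤ c * Real.log (Real.exp 1 * ρ) := by
          apply mul_le_mul_of_nonneg_left _ hc0
          apply Real.log_le_log (by positivity)
          have : (W t : ℝ) ≤ ρ := by exact_mod_cast hWtρ
          nlinarith [Real.exp_pos 1]
      _ ≤ M := by
          rw [hM]
          have hcle : c ≤ (2 / δ) * Real.log (4 * (n : ℝ) ^ 3 / γ) := by
            apply mul_le_mul (by rw [div_le_div_iff₀ hδ0 hδ0]; nlinarith) hL1 hlogt0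
            positivity
          have := mul_le_mul_of_nonneg_right hcle (le_trans zero_le_one hL2)
          linarith
  -- Chernoff bound
  set S : Ω → ℝ := ∑ i, Z i with hS
  have hSapp : ∀ ω, S ω = ∑ i, Z i ω := by
    intro ω; rw [hS]; simp [Finset.sum_apply]
  have hSfun : S = fun ω => ∑ i, Z i ω := by
    funext ω; exact hSapp ω
  have hSmeas : Measurable S := by
    rw [hSfun]; exact Finset.measurable_sum _ fun i _ => hmeas i
  have hSle : ∀ ω, S ω ≤ t := by
    intro ω
    rw [hSapp]
    calc ∑ i, Z i ω ≤ ∑ _i : Fin t, (1 : ℝ) := by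
          apply Finset.sum_le_sum
          intro i _
          rcases h01 i ω with h | h <;> simp [h]
      _ = t := by simp
  have hintexp : Integrable (fun ω => Real.exp (1 * S ω)) ℙ := by
    apply Integrable.mono' (integrable_const (Real.exp t))
      ((hSmeas.const_mul 1).exp.aestronglyMeasurable)
    filter_upwards with ω
    rw [Real.norm_eq_abs, abs_of_pos (Real.exp_pos _), one_mul]
    exact Real.exp_le_exp.mpr (hSle ω)
  have hchern := measure_ge_le_exp_mul_mgf (X := S) (μ := ℙ)
    (Real.exp 1 ^ 2 * M) zero_le_one hintexp
  have hset : {ω | Real.exp 1 ^ 2 * M ≤ ∑ i, Z i ω} = {ω | Real.exp 1 ^ 2 * M ≤ S ω} := by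
    ext ω; simp [hSapp]
  -- bound the mgf of S
  have hmgfS : mgf S ℙ 1 ≤ Real.exp ((Real.exp 1 - 1) * M) := by
    rw [hS, hindep.mgf_sum hmeas]
    calc ∏ i : Fin t, mgf (Z i) ℙ 1
        ≤ ∏ i : Fin t, Real.exp ((Real.exp 1 - 1) * q (i.1 + 1) t) := by
          apply Finset.prod_le_prod
          · intro i _
            rw [hmgf i]
            have := mul_nonneg (by linarith : (0:ℝ) ≤ Real.exp 1 - 1) (hq0 i)
            linarith
          · intro i _
            rw [hmgf i]
            linarith [Real.add_one_le_exp ((Real.exp 1 - 1) * q (i.1 + 1) t)]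
      _ = Real.exp (∑ i : Fin t, (Real.exp 1 - 1) * q (i.1 + 1) t) := (Real.exp_sum _ _).symm
      _ = Real.exp ((Real.exp 1 - 1) * ∑ i : Fin t, q (i.1 + 1) t) := by
          rw [Finset.mul_sum]
      _ ≤ Real.exp ((Real.exp 1 - 1) * M) := by
          apply Real.exp_le_exp.mpr
          exact mul_le_mul_of_nonneg_left hμ (by linarith)
  -- M is nonnegative and large
  have hn' : (1 : ℝ) ≤ n := by exact_mod_cast hn
  have hn0 : (0 : ℝ) < n := lt_of_lt_of_le zero_lt_one hn'
  have hlogn : Real.log (2 * n / γ) ≤ Real.log (4 * (n : ℝ) ^ 3 / γ) := by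
    apply Real.log_le_log (by positivity)
    gcongr ?_ / γ
    nlinarith [sq_nonneg ((n : ℝ) - 1), sq_nonneg ((n : ℝ) + 1)]
  have hlog2n0 : 0 ≤ Real.log (2 * n / γ) := by
    apply Real.log_nonneg
    rw [le_div_iff₀ hγ0]
    nlinarith
  have hL1n0 : 0 ≤ Real.log (4 * (n : ℝ) ^ 3 / γ) := le_trans hlog2n0 hlogn
  have hMlb : Real.log (2 * n / γ) ≤ M := by
    rw [hM, mul_assoc]
    have h2δ : (2 : ℝ) ≤ 2 / δ := by rw [le_div_iff₀ hδ0]; nlinarith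
    set L1 := Real.log (4 * (n : ℝ) ^ 3 / γ) with hL1def
    set L2 := Real.log (Real.exp 1 * ρ) with hL2def
    have s0 : 0 ≤ L1 * L2 := mul_nonneg hL1n0 (by linarith)
    have s1 : L1 * 1 ≤ L1 * L2 := mul_le_mul_of_nonneg_left hL2 hL1n0
    have s2 : 2 * (L1 * L2) ≤ (2 / δ) * (L1 * L2) :=
      mul_le_mul_of_nonneg_right h2δ s0
    linarith
  have hM0 : 0 ≤ M := le_trans hlog2n0 hMlb
  rw [hset]
  calc (ℙ {ω | Real.exp 1 ^ 2 * M ≤ S ω}).toReal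
      ≤ Real.exp (-1 * (Real.exp 1 ^ 2 * M)) * mgf S ℙ 1 := hchern
    _ ≤ Real.exp (-1 * (Real.exp 1 ^ 2 * M)) * Real.exp ((Real.exp 1 - 1) * M) :=
        mul_le_mul_of_nonneg_left hmgfS (Real.exp_pos _).le
    _ = Real.exp ((Real.exp 1 - 1) * M - Real.exp 1 ^ 2 * M) := by
        rw [← Real.exp_add]; ring_nf
    _ ≤ Real.exp (-Real.log (2 * n / γ)) := by
        apply Real.exp_le_exp.mpr
        have he4 : Real.exp 1 ≤ Real.exp 1 ^ 2 := by nlinarith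
        have h1 : 0 ≤ (Real.exp 1 ^ 2 - Real.exp 1) * M :=
          mul_nonneg (by linarith) hM0
        nlinarith
    _ = γ / (2 * n) := by
        rw [Real.exp_neg, Real.exp_log (div_pos (by linarith) hγ0), inv_div]
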